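/- For the skew-symmetric split (α = 2/3) of the Burgers equation on a periodic grid, the discrete L² norm is exactly conserved: if (u_i)_t + (2/3)·(u_{i+1}²/2 − u_{i-1}²/2)/(2h) + (1/3)·u_i·(u_{i+1}−u_{i-1})/(2h) = 0 for all i with periodic indexing, then d/dt Σ_i h·u_i² = 0. -/

import Mathlib

/-- Discrete L² conservation for the skew-symmetric split (α = 2/3) of the
Burgers equation on a periodic grid: if the grid values satisfy the
skew-symmetric split-form ODE system, then `d/dt Σᵢ h uᵢ² = 0`. -/
theorem burgers_skew_symmetric_discrete_L2_conserved
    (N : ℕ) [NeZero N] (h : ℝ) (hh : 0 < h)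
    (u : ℝ → ZMod N → ℝ)
    (hode : ∀ (t : ℝ) (i : ZMod N),
      HasDerivAt (fun s => u s i)
        (-((2 / 3) * ((u t (i + 1)) ^ 2 / 2 - (u t (i - 1)) ^ 2 / 2) / (2 * h)
            + (1 / 3) * u t i * (u t (i + 1) - u t (i - 1)) / (2 * h))) t) :
    ∀ t : ℝ,
      HasDerivAt (fun s => ∑ i : ZMod N, h * (u s i) ^ 2) 0 t := by
  intro t
  have hne : h ≠ 0 := ne_of_gt hh
  set d : ZMod N → ℝ := fun i =>
    -((2 / 3) * ((u t (i + 1)) ^ 2 / 2 - (u t (i - 1)) ^ 2 / 2) / (2 * h)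
        + (1 / 3) * u t i * (u t (i + 1) - u t (i - 1)) / (2 * h)) with hd
  have H : HasDerivAt (fun s => ∑ i : ZMod N, h * (u s i) ^ 2)
      (∑ i : ZMod N, h * (2 * u t i * d i)) t := by
    apply HasDerivAt.fun_sum
    intro i _
    have h1 := ((hode t i).fun_pow 2).const_mul h
    convert h1 using 1
    · rfl
    simp [hd]
  set g : ZMod N → ℝ := fun i => u t i * u t (i + 1) * (u t i + u t (i + 1)) with hg
  have hterm : ∀ i : ZMod N, h * (2 * u t i * d i) = -(1/3) * (g i - g (i - 1)) := by
    intro i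
    have : i - 1 + 1 = i := by ring
    simp only [hd, hg, this]
    field_simp
    ring
  have hsum : (∑ i : ZMod N, h * (2 * u t i * d i)) = 0 := by
    simp only [hterm]
    rw [← Finset.mul_sum, Finset.sum_sub_distrib]
    have : (∑ i : ZMod N, g (i - 1)) = ∑ i : ZMod N, g i :=
      Fintype.sum_equiv (Equiv.subRight (1 : ZMod N)) _ _ (fun i => rfl)
    rw [this, sub_self, mul_zero]
  rwa [hsum] at H
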